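/- If two vertices v,w of a connected graph G are not twins, then dist_G(v,w) equals the distance in the twin graph between their twin classes: dist_G(v,w) = dist_{G*}(v*, w*). -/

import Mathlib

/-- Two distinct vertices are twins if they have the same open neighbourhood
or the same closed neighbourhood. -/
def Twins {V : Type*} (G : SimpleGraph V) (u v : V) : Prop :=
  u ≠ v ∧ ((∀ x, G.Adj u x ↔ G.Adj v x) ∨ (∀ x, (G.Adj u x ∨ u = x) ↔ (G.Adj v x ∨ v = x)))

/-- The equivalence relation "equal or twins". -/
def twinSetoid {V : Type*} (G : SimpleGraph V) : Setoid V :=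
  ⟨fun u v => u = v ∨ Twins G u v, by
    constructor
    · exact fun x => Or.inl rfl
    · rintro x y (rfl | ⟨hne, h⟩)
      · exact Or.inl rfl
      · exact Or.inr ⟨hne.symm, h.imp (fun h x => (h x).symm) (fun h x => (h x).symm)⟩
    · rintro x y z (rfl | hxy) (rfl | hyz)
      · exact Or.inl rfl
      · exact Or.inr hyz
      · exact Or.inr hxy
      · by_cases hxz : x = z
        · exact Or.inl hxz
        · refine Or.inr ⟨hxz, ?_⟩
          obtain ⟨hxy', ho | hc⟩ := hxy <;> obtain ⟨hyz', ho2 | hc2⟩ := hyz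
          · exact Or.inl (fun a => (ho a).trans (ho2 a))
          · exfalso
            have hyzadj : G.Adj y z := by
              rcases (hc2 z).mpr (Or.inr rfl) with h | h
              · exact h
              · exact absurd h hyz'
            have hxy_nadj : ¬ G.Adj x y := fun h => ((ho y).mp h).ne rfl
            have hxz_adj : G.Adj x z := (ho z).mpr hyzadj
            rcases (hc2 x).mpr (Or.inl hxz_adj.symm) with h | h
            · exact hxy_nadj h.symm
            · exact hxy' h.symm
          · exfalso
            have hxyadj : G.Adj x y := by
              rcases (hc y).mpr (Or.inr rfl) with h | h
              · exact h
              · exact absurd h hxy'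
            have hyz_nadj : ¬ G.Adj y z := fun h => ((ho2 z).mp h).ne rfl
            have hzx_adj : G.Adj z x := (ho2 x).mp hxyadj.symm
            rcases (hc z).mp (Or.inl hzx_adj.symm) with h | h
            · exact hyz_nadj h
            · exact hyz' h
          · exact Or.inr (fun a => (hc a).trans (hc2 a))⟩

/-- The twin graph `G*`: the quotient of `G` by the twin relation, two classes
being adjacent iff some (equivalently, every) pair of their members is adjacent. -/
def twinGraph {V : Type*} (G : SimpleGraph V) : SimpleGraph (Quotient (twinSetoid G)) where
  Adj a b := a ≠ b ∧ ∃ u v : V, Quotient.mk (twinSetoid G) u = a ∧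
      Quotient.mk (twinSetoid G) v = b ∧ G.Adj u v
  symm := ⟨by
    rintro a b ⟨hab, u, v, hu, hv, h⟩
    exact ⟨hab.symm, v, u, hv, hu, h.symm⟩⟩
  loopless := ⟨by
    rintro a ⟨h, -⟩
    exact h rfl⟩

private lemma twins_adj_step {V : Type*} {G : SimpleGraph V} {x u y : V}
    (ht : Twins G x u) (hxy : G.Adj x y) (huy : u ≠ y) : G.Adj u y := by
  obtain ⟨hne, ho | hc⟩ := ht
  · exact (ho y).mp hxy
  · rcases (hc y).mp (Or.inl hxy) with h | h
    · exact h
    · exact absurd h huy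

private lemma adj_of_classes_adj {V : Type*} {G : SimpleGraph V} {u w : V}
    (h : (twinGraph G).Adj (Quotient.mk (twinSetoid G) u) (Quotient.mk (twinSetoid G) w)) :
    G.Adj u w := by
  obtain ⟨hab, x, y, hx, hy, hxy⟩ := h
  have huw : u ≠ w := fun e => hab (by rw [e])
  have hux : x = u ∨ Twins G x u := by
    have := Quotient.exact hx
    rcases this with h | h
    · exact Or.inl h
    · exact Or.inr h
  have huy : u ≠ y := by
    rintro rfl
    exact hab hy
  have h1 : G.Adj u y := by
    rcases hux with rfl | ht
    · exact hxy
    · exact twins_adj_step ht hxy huy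
  have hwy : y = w ∨ Twins G y w := by
    have := Quotient.exact hy
    rcases this with h | h
    · exact Or.inl h
    · exact Or.inr h
  rcases hwy with rfl | ht
  · exact h1
  · exact (twins_adj_step ht h1.symm (Ne.symm huw)).symm

private lemma lift_walk {V : Type*} {G : SimpleGraph V} :
    ∀ {a b : Quotient (twinSetoid G)} (p : (twinGraph G).Walk a b) (u w : V),
      Quotient.mk (twinSetoid G) u = a → Quotient.mk (twinSetoid G) w = b → a ≠ b →
      ∃ q : G.Walk u w, q.length ≤ p.length := by
  intro a b p
  induction p with
  | nil => intro u w hu hw hab; exact absurd rfl hab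
  | @cons a c b h p ih =>
    intro u w hu hw hab
    by_cases hcb : c = b
    · subst hcb
      have : G.Adj u w := adj_of_classes_adj (by rw [hu, hw]; exact h)
      exact ⟨SimpleGraph.Walk.cons this SimpleGraph.Walk.nil, by simp⟩
    · have hm : Quotient.mk (twinSetoid G) c.out = c := Quotient.out_eq c
      have hadjm : G.Adj u c.out := adj_of_classes_adj (by rw [hu, hm]; exact h)
      obtain ⟨q, hq⟩ := ih c.out w hm hw hcb
      exact ⟨SimpleGraph.Walk.cons hadjm q, by simpa using Nat.add_le_add_right hq 1⟩

private lemma push_walk {V : Type*} {G : SimpleGraph V} :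
    ∀ {u w : V} (p : G.Walk u w),
      ∃ q : (twinGraph G).Walk (Quotient.mk (twinSetoid G) u) (Quotient.mk (twinSetoid G) w),
        q.length ≤ p.length := by
  intro u w p
  induction p with
  | nil => exact ⟨SimpleGraph.Walk.nil, le_refl _⟩
  | @cons u m w h p ih =>
    obtain ⟨q, hq⟩ := ih
    by_cases he : Quotient.mk (twinSetoid G) u = Quotient.mk (twinSetoid G) m
    · rw [he]
      exact ⟨q, by simpa using Nat.le_succ_of_le hq⟩
    · refine ⟨SimpleGraph.Walk.cons ⟨he, u, m, rfl, rfl, h⟩ q, ?_⟩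
      show q.length + 1 ≤ p.length + 1
      exact Nat.add_le_add_right hq 1

theorem dist_eq_twinGraph_dist {V : Type*} (G : SimpleGraph V) (hG : G.Connected)
    (v w : V) (h : ¬ Twins G v w) :
    G.dist v w =
      (twinGraph G).dist (Quotient.mk (twinSetoid G) v) (Quotient.mk (twinSetoid G) w) := by
  by_cases hvw : v = w
  · subst hvw; rw [SimpleGraph.dist_self, SimpleGraph.dist_self]
  have hne : Quotient.mk (twinSetoid G) v ≠ Quotient.mk (twinSetoid G) w := by
    intro he
    rcases Quotient.exact he with h' | h'
    · exact hvw h'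
    · exact h h'
  have hreach : G.Reachable v w := hG.preconnected v w
  have hreach' : (twinGraph G).Reachable (Quotient.mk (twinSetoid G) v)
      (Quotient.mk (twinSetoid G) w) := by
    obtain ⟨p⟩ := hreach
    obtain ⟨q, -⟩ := push_walk p
    exact ⟨q⟩
  apply le_antisymm
  · obtain ⟨p, hp⟩ := hreach'.exists_walk_length_eq_dist
    obtain ⟨q, hq⟩ := lift_walk p v w rfl rfl hne
    calc G.dist v w ≤ q.length := SimpleGraph.dist_le q
      _ ≤ p.length := hq
      _ = _ := hp
  · obtain ⟨p, hp⟩ := hreach.exists_walk_length_eq_dist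
    obtain ⟨q, hq⟩ := push_walk p
    calc (twinGraph G).dist _ _ ≤ q.length := SimpleGraph.dist_le q
      _ ≤ p.length := hq
      _ = _ := hp
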